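/- Let θ : F(a,b) → F(a,b) be the endomorphism of the free group on two generators determined by θ(a) = ab and θ(b) = ba. Then θ has no periodic conjugacy class: there do not exist an element w ∈ F(a,b) with w ≠ 1 and positive integers i, j such that θⁱ(w) is conjugate in F(a,b) to wʲ. -/

import Mathlib

/-- The endomorphism `θ` of the free group `F(a,b)` (with `a = of true`, `b = of false`)
determined by `θ(a) = ab` and `θ(b) = ba`. -/
def θ : FreeGroup Bool →* FreeGroup Bool :=
  FreeGroup.lift fun x : Bool =>
    if x then FreeGroup.of true * FreeGroup.of false
    else FreeGroup.of false * FreeGroup.of true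

namespace TMaux

abbrev A := Bool × Bool

/-- Two adjacent letters do NOT cancel. -/
abbrev Rc (x y : A) : Prop := ¬(x.1 = y.1 ∧ x.2 = !y.2)

/-- A word is reduced. -/
abbrev NR (L : List A) : Prop := List.Chain' Rc L

lemma NR_reduce (L : List A) : NR (FreeGroup.reduce L) := by
  induction L with
  | nil => simp [NR, List.Chain']
  | cons x L ih =>
    rw [FreeGroup.reduce.cons]
    rcases h : FreeGroup.reduce L with _ | ⟨y, t⟩
    · simp [NR, List.Chain']
    · rw [h] at ih
      dsimp only
      split_ifs with hc
      · exact ih.tail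
      · exact List.isChain_cons_cons.mpr ⟨hc, ih⟩

lemma reduce_eq_self {L : List A} (h : NR L) : FreeGroup.reduce L = L := by
  induction L with
  | nil => rfl
  | cons x L ih =>
    rw [FreeGroup.reduce.cons, ih h.tail]
    rcases hL : L with _ | ⟨y, t⟩
    · rfl
    · dsimp only
      rw [if_neg]
      subst hL
      exact (List.isChain_cons_cons.mp h).1

lemma toWord_mk_nr {L : List A} (h : NR L) : (FreeGroup.mk L).toWord = L := by
  rw [FreeGroup.toWord_mk, reduce_eq_self h]

lemma nr_toWord (x : FreeGroup Bool) : NR x.toWord := by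
  have := NR_reduce x.toWord
  rwa [FreeGroup.reduce_toWord] at this

/-! ### The substitution -/

def b1 : A → A := fun x => if x.2 then (x.1, true) else (!x.1, false)
def b2 : A → A := fun x => if x.2 then (!x.1, true) else (x.1, false)

def Sub : List A → List A
  | [] => []
  | x :: L => b1 x :: b2 x :: Sub L

@[simp] lemma Sub_nil : Sub [] = [] := rfl
@[simp] lemma Sub_cons (x : A) (L : List A) : Sub (x :: L) = b1 x :: b2 x :: Sub L := rfl

@[simp] lemma length_Sub : ∀ L : List A, (Sub L).length = 2 * L.length
  | [] => rfl
  | _ :: L => by simp [length_Sub L]; omega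

lemma Rb1b2 : ∀ x : A, Rc (b1 x) (b2 x) := by decide

lemma Rjunc : ∀ x y : A, Rc x y → Rc (b2 x) (b1 y) := by decide

lemma NR_Sub : ∀ {L : List A}, NR L → NR (Sub L)
  | [], _ => by simp [NR, List.Chain']
  | [x], _ => by
      simp only [Sub_cons, Sub_nil]
      exact List.isChain_cons_cons.mpr ⟨Rb1b2 x, List.isChain_singleton _⟩
  | x :: y :: L, h => by
      simp only [Sub_cons]
      refine List.isChain_cons_cons.mpr ⟨Rb1b2 x, List.isChain_cons_cons.mpr ⟨?_, ?_⟩⟩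
      · exact Rjunc x y (List.isChain_cons_cons.mp h).1
      · have := NR_Sub (L := y :: L) h.tail
        simpa [NR, List.Chain'] using this

/-! ### θ acts on words by the substitution -/

lemma mk_single_true (g : Bool) : FreeGroup.mk [(g, true)] = FreeGroup.of g := rfl

lemma mk_single_inv (a s : Bool) :
    FreeGroup.mk [(a, !s)] = (FreeGroup.mk [(a, s)])⁻¹ := by
  rw [FreeGroup.inv_mk]
  simp [FreeGroup.invRev]

lemma theta_of (g : Bool) : θ (FreeGroup.of g) = FreeGroup.of g * FreeGroup.of (!g) := by
  cases g <;> simp [θ, FreeGroup.lift_apply_of]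

lemma theta_mk : ∀ L : List A, θ (FreeGroup.mk L) = FreeGroup.mk (Sub L)
  | [] => by
      have : FreeGroup.mk ([] : List A) = 1 := rfl
      rw [this, map_one]; rfl
  | (g, s) :: L => by
      have hsplit : FreeGroup.mk ((g, s) :: L) = FreeGroup.mk [(g, s)] * FreeGroup.mk L := by
        rw [FreeGroup.mul_mk]; rfl
      rw [hsplit, map_mul, theta_mk L]
      have hsingle : θ (FreeGroup.mk [(g, s)]) = FreeGroup.mk [b1 (g, s), b2 (g, s)] := by
        cases s
        · have h1 : FreeGroup.mk [(g, false)] = (FreeGroup.of g)⁻¹ := by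
            rw [← mk_single_true g, ← mk_single_inv g true]
            rfl
          rw [h1, map_inv, theta_of, mul_inv_rev,
            ← mk_single_true g, ← mk_single_true (!g),
            ← mk_single_inv g true, ← mk_single_inv (!g) true, FreeGroup.mul_mk]
          show FreeGroup.mk [(!g, !true), (g, !true)] = _
          simp [b1, b2]
        · rw [mk_single_true, theta_of, ← mk_single_true g, ← mk_single_true (!g),
            FreeGroup.mul_mk]
          simp [b1, b2]
      rw [hsingle, FreeGroup.mul_mk]
      rfl

lemma toWord_theta (x : FreeGroup Bool) : (θ x).toWord = Sub x.toWord := by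
  conv_lhs => rw [← FreeGroup.mk_toWord (x := x)]
  rw [theta_mk, toWord_mk_nr (NR_Sub (nr_toWord x))]

lemma toWord_theta_iter (k : ℕ) (x : FreeGroup Bool) :
    ((⇑θ)^[k] x).toWord = Sub^[k] x.toWord := by
  induction k generalizing x with
  | zero => rfl
  | succ k ih =>
    rw [Function.iterate_succ_apply', Function.iterate_succ_apply',
      toWord_theta, ih]

lemma length_Sub_iter (k : ℕ) (L : List A) : (Sub^[k] L).length = 2 ^ k * L.length := by
  induction k with
  | zero => simp
  | succ k ih =>
    rw [Function.iterate_succ_apply', length_Sub, ih, pow_succ]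
    ring

/-! ### Cancellation structure of products -/

lemma lemA : ∀ (X Y : List A), NR X → NR Y →
    ∃ d, d ≤ X.length ∧ d ≤ Y.length ∧
      (FreeGroup.mk X * FreeGroup.mk Y).toWord = X.take (X.length - d) ++ Y.drop d := by
  intro X
  induction X using List.reverseRecOn with
  | nil =>
    intro Y _ hY
    refine ⟨0, Nat.zero_le _, Nat.zero_le _, ?_⟩
    have h1 : FreeGroup.mk ([] : List A) = 1 := rfl
    rw [h1, one_mul, toWord_mk_nr hY]
    simp
  | append_singleton X' c ih =>
    intro Y hX hY
    rcases Y with _ | ⟨y, Y'⟩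
    · refine ⟨0, Nat.zero_le _, Nat.zero_le _, ?_⟩
      have h1 : FreeGroup.mk ([] : List A) = 1 := rfl
      rw [h1, mul_one, toWord_mk_nr hX]
      simp
    · by_cases hcan : y = (c.1, !c.2)
      · have hX' : NR X' := (List.isChain_append.mp hX).1
        obtain ⟨d', hd1, hd2, heq⟩ := ih Y' hX' hY.tail
        have hkill : FreeGroup.mk [c] * FreeGroup.mk [y] = 1 := by
          subst hcan
          obtain ⟨a, s⟩ := c
          rw [show ((a, s).1, !(a, s).2) = (a, !s) from rfl, mk_single_inv a s, mul_inv_cancel]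
        have hgrp : FreeGroup.mk (X' ++ [c]) * FreeGroup.mk (y :: Y')
            = FreeGroup.mk X' * FreeGroup.mk Y' := by
          rw [← FreeGroup.mul_mk, show (y :: Y') = [y] ++ Y' from rfl, ← FreeGroup.mul_mk]
          calc FreeGroup.mk X' * FreeGroup.mk [c] * (FreeGroup.mk [y] * FreeGroup.mk Y')
              = FreeGroup.mk X' * (FreeGroup.mk [c] * FreeGroup.mk [y]) * FreeGroup.mk Y' := by
                group
            _ = FreeGroup.mk X' * FreeGroup.mk Y' := by rw [hkill]; group
        refine ⟨d' + 1, by simp only [List.length_append, List.length_cons, List.length_nil]; omega,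
          Nat.succ_le_succ hd2, ?_⟩
        rw [hgrp, heq]
        have hlen : (X' ++ [c]).length - (d' + 1) = X'.length - d' := by
          simp only [List.length_append, List.length_cons, List.length_nil]; omega
        rw [hlen, List.take_append_of_le_length (Nat.sub_le _ _)]
        rfl
      · have hR : Rc c y := by
          rintro ⟨h1, h2⟩
          apply hcan
          have hy2 : y.2 = !c.2 := by rw [h2, Bool.not_not]
          exact Prod.ext h1.symm hy2
        have hNR : NR ((X' ++ [c]) ++ (y :: Y')) := by
          refine List.isChain_append.mpr ⟨hX, hY, ?_⟩
          intro x hx z hz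
          simp [List.getLast?_concat] at hx
          simp at hz
          subst hx; subst hz; exact hR
        refine ⟨0, Nat.zero_le _, Nat.zero_le _, ?_⟩
        rw [FreeGroup.mul_mk, toWord_mk_nr hNR, Nat.sub_zero, List.take_length, List.drop_zero]

lemma lemA' (x y : FreeGroup Bool) :
    ∃ d, d ≤ x.toWord.length ∧ d ≤ y.toWord.length ∧
      (x * y).toWord = x.toWord.take (x.toWord.length - d) ++ y.toWord.drop d := by
  have := lemA x.toWord y.toWord (nr_toWord x) (nr_toWord y)
  simpa [FreeGroup.mk_toWord] using this

/-! ### norms -/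

def nn (x : FreeGroup Bool) : ℕ := x.toWord.length

lemma nn_inv (x : FreeGroup Bool) : nn x⁻¹ = nn x := by
  simp [nn, FreeGroup.toWord_inv, FreeGroup.invRev_length]

lemma nn_mul_le (x y : FreeGroup Bool) : nn (x * y) ≤ nn x + nn y := by
  obtain ⟨d, h1, h2, heq⟩ := lemA' x y
  simp only [nn, heq, List.length_append, List.length_take, List.length_drop]
  omega

lemma nn_theta_iter (k : ℕ) (x : FreeGroup Bool) : nn ((⇑θ)^[k] x) = 2 ^ k * nn x := by
  simp [nn, toWord_theta_iter, length_Sub_iter]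

/-! ### cyclically reduced words and powers -/

def CC (L : List A) : Prop := ∀ x ∈ L.getLast?, ∀ y ∈ L.head?, Rc x y

def repw : ℕ → List A → List A
  | 0, _ => []
  | K + 1, U => U ++ repw K U

@[simp] lemma length_repw : ∀ (K : ℕ) (U : List A), (repw K U).length = K * U.length
  | 0, _ => by simp [repw]
  | K + 1, U => by simp [repw, length_repw K U]; ring

lemma head?_repw : ∀ (K : ℕ) (U : List A) (y : A), (repw K U).head? = some y → U.head? = some y := by
  intro K
  induction K with
  | zero => intro U y h; simp [repw] at h
  | succ K ih =>
    intro U y h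
    rcases U with _ | ⟨u, U'⟩
    · exact ih _ _ h
    · simpa [repw] using h

lemma NR_repw {U : List A} (hU : NR U) (hCC : CC U) : ∀ K, NR (repw K U)
  | 0 => by simp [repw, NR, List.Chain']
  | K + 1 => by
    rw [repw, NR, List.Chain', List.isChain_append]
    exact ⟨hU, NR_repw hU hCC K, fun x hx y hy => hCC x hx y (head?_repw K U y hy)⟩

lemma mk_repw (U : List A) : ∀ K, (FreeGroup.mk U) ^ K = FreeGroup.mk (repw K U)
  | 0 => by rw [pow_zero]; rfl
  | K + 1 => by rw [pow_succ', mk_repw U K, FreeGroup.mul_mk]; rfl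

lemma toWord_pow {u : FreeGroup Bool} (hCC : CC u.toWord) (K : ℕ) :
    (u ^ K).toWord = repw K u.toWord := by
  conv_lhs => rw [← FreeGroup.mk_toWord (x := u)]
  rw [mk_repw, toWord_mk_nr (NR_repw (nr_toWord u) hCC K)]

/-! ### indexing -/

def idx (L : List A) (r : ℕ) : A := (L[r]?).getD (true, true)

@[simp] lemma idx_cons_zero (x : A) (L : List A) : idx (x :: L) 0 = x := by simp [idx]
@[simp] lemma idx_cons_succ (x : A) (L : List A) (r : ℕ) : idx (x :: L) (r + 1) = idx L r := by
  simp [idx]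

lemma idx_append_right (P Q : List A) (r : ℕ) : idx (P ++ Q) (P.length + r) = idx Q r := by
  induction P with
  | nil => simp
  | cons p P ih => simpa [List.length_cons, Nat.succ_add] using ih

lemma idx_append_left (P Q : List A) (r : ℕ) (h : r < P.length) :
    idx (P ++ Q) r = idx P r := by
  simp [idx, List.getElem?_append_left h]

lemma idx_drop (L : List A) (m r : ℕ) : idx (L.drop m) r = idx L (m + r) := by
  simp [idx, List.getElem?_drop]

lemma idx_take (L : List A) (m r : ℕ) (h : r < m) : idx (L.take m) r = idx L r := by
  simp [idx, List.getElem?_take, h]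

lemma idx_Sub : ∀ (L : List A) (r : ℕ), r < L.length →
    idx (Sub L) (2 * r) = b1 (idx L r) ∧ idx (Sub L) (2 * r + 1) = b2 (idx L r) := by
  intro L
  induction L with
  | nil => intro r h; simp at h
  | cons x L ih =>
    intro r hr
    cases r with
    | zero => refine ⟨?_, ?_⟩ <;> simp
    | succ r =>
      have h2 : 2 * (r + 1) = (2 * r) + 1 + 1 := by ring
      rw [h2]
      simp only [Sub_cons, idx_cons_succ]
      exact ih r (by simpa using Nat.lt_of_succ_lt_succ hr)

lemma idx_repw : ∀ (K : ℕ) (U : List A) (r : ℕ), r < (repw K U).length →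
    idx (repw K U) r = idx U (r % U.length) := by
  intro K
  induction K with
  | zero => intro U r h; simp [repw] at h
  | succ K ih =>
    intro U r h
    by_cases hr : r < U.length
    · rw [repw, idx_append_left _ _ _ hr, Nat.mod_eq_of_lt hr]
    · push_neg at hr
      have hrw : r = U.length + (r - U.length) := by omega
      rw [repw, hrw, idx_append_right]
      have hlt : r - U.length < (repw K U).length := by
        rw [length_repw]
        have h' : r < K * U.length + U.length := by
          simpa [Nat.succ_mul, length_repw] using h
        omega
      rw [ih U (r - U.length) hlt]
      congr 1
      rw [Nat.add_mod_left]

/-! ### aperiodicity of the substitution -/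

def flip1 (y : A) : A := (!y.1, y.2)
def unf (y : A) : A := (if y.2 then y.1 else !y.1, y.2)

lemma b2_eq : ∀ x : A, b2 x = flip1 (b1 x) := by decide
lemma unf_b1 : ∀ x : A, unf (b1 x) = x := by decide
lemma flip1_ne : ∀ y : A, flip1 y ≠ y := by decide
lemma flip1_invol : ∀ y : A, flip1 (flip1 y) = y := by decide

lemma flip1_iter_even : ∀ (s : ℕ) (y : A), flip1^[2 * s] y = y := by
  intro s
  induction s with
  | zero => intro y; rfl
  | succ s ih =>
    intro y
    have h : 2 * (s + 1) = 2 * s + 2 := by ring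
    rw [h, Function.iterate_add_apply]
    rw [show flip1^[2] y = y from flip1_invol y]
    exact ih y

lemma flip1_iter_odd (q : ℕ) (hq : q % 2 = 1) (y : A) : flip1^[q] y = flip1 y := by
  obtain ⟨s, hs⟩ : ∃ s, q = 2 * s + 1 := ⟨q / 2, by omega⟩
  subst hs
  rw [Function.iterate_add_apply, flip1_iter_even]
  rfl

/-- Main combinatorial lemma: a long factor of `Sub^[k] V` cannot have period `q`
when `2q ≤ 2^k`. -/
lemma MCL : ∀ (k : ℕ) (V : List A) (o p q : ℕ),
    1 ≤ q → 2 * q ≤ 2 ^ k →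
    o + p ≤ (Sub^[k] V).length →
    (∀ t, t + q < p → idx (Sub^[k] V) (o + t + q) = idx (Sub^[k] V) (o + t)) →
    2 * q + 4 * 2 ^ k ≤ p + 4 → False := by
  intro k
  induction k with
  | zero =>
    intro V o p q h1 h2 _ _ _
    simp at h2
    omega
  | succ k ih =>
    intro V o p q hq hqk hop hper hlen
    have hWV : Sub^[k + 1] V = Sub (Sub^[k] V) := Function.iterate_succ_apply' Sub k V
    set W := Sub^[k + 1] V with hWdef
    set V' := Sub^[k] V with hV'def
    have hlenW : W.length = 2 * V'.length := by rw [hWV, length_Sub]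
    have hpow : (2 : ℕ) ^ (k + 1) = 2 * 2 ^ k := by rw [pow_succ]; ring
    have hpowpos : (1 : ℕ) ≤ 2 ^ k := Nat.one_le_two_pow
    have heven : ∀ s, 2 * s + 1 < W.length → idx W (2 * s + 1) = flip1 (idx W (2 * s)) := by
      intro s hs
      have hsV : s < V'.length := by omega
      obtain ⟨h1, h2⟩ := idx_Sub V' s hsV
      rw [hWV, h1, h2, b2_eq]
    have hcritodd : ∀ r, r + 1 < W.length → idx W (r + 1) ≠ flip1 (idx W r) → r % 2 = 1 := by
      intro r hr hne
      by_contra hpar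
      have h0 : r % 2 = 0 := by omega
      obtain ⟨s, hs⟩ : ∃ s, r = 2 * s := ⟨r / 2, by omega⟩
      subst hs
      exact hne (heven s hr)
    have hp6 : 2 * q + 4 ≤ p := by omega
    rcases Nat.even_or_odd q with hqe | hqo
    · -- even period: descend
      obtain ⟨q', hq'⟩ := hqe
      have hq2 : q = 2 * q' := by omega
      obtain ⟨e, hedef⟩ : ∃ e, (o + 1) / 2 = e := ⟨_, rfl⟩
      obtain ⟨p', hp'def⟩ : ∃ x, (p - 3) / 2 = x := ⟨_, rfl⟩
      have h2e : 2 * e = o + o % 2 := by omega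
      have h2p' : 2 * p' ≤ p - 3 ∧ p - 4 ≤ 2 * p' := by omega
      have hC : e + p' ≤ V'.length := by omega
      have hE : 2 * q' + 4 * 2 ^ k ≤ p' + 4 := by omega
      have hD : ∀ t, t + q' < p' → idx V' (e + t + q') = idx V' (e + t) := by
        intro t ht
        have hrange : e + t + q' < V'.length := by omega
        have hrange2 : e + t < V'.length := by omega
        have h2r : ∀ s, s < V'.length → idx V' s = unf (idx W (2 * s)) := by
          intro s hs
          obtain ⟨h1, _⟩ := idx_Sub V' s hs
          rw [hWV, h1, unf_b1]
        rw [h2r _ hrange, h2r _ hrange2]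
        congr 1
        have harith1 : 2 * (e + t + q') = o + (o % 2 + 2 * t) + q := by omega
        have harith2 : 2 * (e + t) = o + (o % 2 + 2 * t) := by omega
        rw [harith1, harith2]
        exact hper (o % 2 + 2 * t) (by omega)
      exact ih V e p' q' (by omega) (by omega) hC hD hE
    · -- odd period: contradiction
      have hqodd : q % 2 = 1 := Nat.odd_iff.mp hqo
      by_cases hcrit : ∃ t, t + 1 < p ∧ idx W (o + t + 1) ≠ flip1 (idx W (o + t))
      · obtain ⟨t, ht, hne⟩ := hcrit
        have hodd1 : (o + t) % 2 = 1 := hcritodd (o + t) (by omega) hne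
        by_cases h2 : t + q + 1 < p
        · have e1 : idx W (o + t + q + 1) = idx W (o + t + 1) := by
            have := hper (t + 1) (by omega)
            have harith : o + (t + 1) + q = o + t + q + 1 := by omega
            rwa [harith] at this
          have e0 : idx W (o + t + q) = idx W (o + t) := hper t (by omega)
          have hne2 : idx W (o + t + q + 1) ≠ flip1 (idx W (o + t + q)) := by
            rw [e1, e0]; exact hne
          have hodd2 : (o + t + q) % 2 = 1 := hcritodd (o + t + q) (by omega) hne2
          omega
        · have hqt : q ≤ t := by omega
          have e0 : idx W (o + t) = idx W (o + (t - q)) := by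
            have := hper (t - q) (by omega)
            have harith : o + (t - q) + q = o + t := by omega
            rwa [harith] at this
          have e1 : idx W (o + t + 1) = idx W (o + (t - q) + 1) := by
            have := hper (t + 1 - q) (by omega)
            have harith : o + (t + 1 - q) + q = o + t + 1 := by omega
            have harith2 : o + (t + 1 - q) = o + (t - q) + 1 := by omega
            rw [harith, harith2] at this
            exact this
          have hne2 : idx W (o + (t - q) + 1) ≠ flip1 (idx W (o + (t - q))) := by
            rw [← e1, ← e0]; exact hne
          have hodd2 : (o + (t - q)) % 2 = 1 := hcritodd (o + (t - q)) (by omega) hne2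
          omega
      · push_neg at hcrit
        have hiter : ∀ t, t < p → idx W (o + t) = flip1^[t] (idx W o) := by
          intro t
          induction t with
          | zero => intro _; rfl
          | succ t iht =>
            intro ht
            rw [show o + (t + 1) = o + t + 1 from rfl, hcrit t (by omega),
              iht (by omega), Function.iterate_succ_apply']
        have h0 : idx W (o + q) = idx W o := by
          have := hper 0 (by omega)
          simpa using this
        have h1 : idx W (o + q) = flip1 (idx W o) := by
          rw [hiter q (by omega), flip1_iter_odd q hqodd]
        rw [h0] at h1
        exact flip1_ne _ h1.symm

/-! ### conjugation to cyclically reduced form -/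

lemma CC_single (c : A) : CC [c] := by
  intro x hx y hy
  simp at hx hy
  subst hx; subst hy
  simp [Rc]

lemma cyc_aux : ∀ (m : ℕ) (w : FreeGroup Bool), w.toWord.length ≤ m → w ≠ 1 →
    ∃ h u : FreeGroup Bool, u ≠ 1 ∧ CC u.toWord ∧ w = h * u * h⁻¹ := by
  intro m
  induction m with
  | zero =>
    intro w hl hw
    exact absurd (FreeGroup.toWord_eq_nil_iff.mp (List.length_eq_zero_iff.mp (Nat.le_zero.mp hl))) hw
  | succ m ih =>
    intro w hl hw
    by_cases hcc : CC w.toWord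
    · exact ⟨1, w, hw, hcc, by group⟩
    · have hL : w.toWord ≠ [] := fun h => hw (FreeGroup.toWord_eq_nil_iff.mp h)
      have hnr : NR w.toWord := nr_toWord w
      obtain ⟨c, T, hLT⟩ := List.exists_cons_of_ne_nil hL
      rcases List.eq_nil_or_concat T with hT | ⟨M, c', hT⟩
      · subst hT
        exact absurd (by rw [hLT]; exact CC_single c) hcc
      · subst hT
        rw [List.concat_eq_append] at hLT
        have hlast : w.toWord.getLast? = some c' := by
          rw [hLT, show c :: (M ++ [c']) = (c :: M) ++ [c'] from rfl, List.getLast?_concat]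
        have hhead : w.toWord.head? = some c := by rw [hLT]; rfl
        have hnRc : ¬ Rc c' c := by
          intro hR
          apply hcc
          intro x hx y hy
          rw [hlast] at hx
          rw [hhead] at hy
          simp at hx hy
          subst hx; subst hy
          exact hR
        have hc' : c' = (c.1, !c.2) := by
          have h2 := not_not.mp hnRc
          exact Prod.ext h2.1 h2.2
        have hmkinv : FreeGroup.mk [c'] = (FreeGroup.mk [c])⁻¹ := by
          obtain ⟨a, sc⟩ := c
          rw [hc']
          exact mk_single_inv a sc
        have hw_eq : w = FreeGroup.mk [c] * FreeGroup.mk M * (FreeGroup.mk [c])⁻¹ := by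
          conv_lhs => rw [← FreeGroup.mk_toWord (x := w), hLT]
          rw [show c :: (M ++ [c']) = [c] ++ (M ++ [c']) from rfl, ← FreeGroup.mul_mk,
            ← FreeGroup.mul_mk, hmkinv, mul_assoc]
        have hM : NR M := by
          rw [hLT] at hnr
          exact (List.isChain_append.mp hnr.tail).1
        have htW : (FreeGroup.mk M).toWord = M := toWord_mk_nr hM
        have hwlen : (FreeGroup.mk M).toWord.length ≤ m := by
          rw [htW]
          have h1 : w.toWord.length ≤ m + 1 := hl
          rw [hLT] at h1
          simp at h1
          omega
        have hw'ne : FreeGroup.mk M ≠ 1 := by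
          intro h1
          apply hw
          rw [hw_eq, h1]
          group
        obtain ⟨h', u, hu, hucc, hdef⟩ := ih (FreeGroup.mk M) hwlen hw'ne
        exact ⟨FreeGroup.mk [c] * h', u, hu, hucc, by rw [hw_eq, hdef]; group⟩

lemma cyc_decomp (w : FreeGroup Bool) (hw : w ≠ 1) :
    ∃ h u : FreeGroup Bool, u ≠ 1 ∧ CC u.toWord ∧ w = h * u * h⁻¹ :=
  cyc_aux w.toWord.length w le_rfl hw

/-! ### θ-iterate is multiplicative -/

lemma it_mul (k : ℕ) (x y : FreeGroup Bool) :
    (⇑θ)^[k] (x * y) = (⇑θ)^[k] x * (⇑θ)^[k] y := by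
  induction k generalizing x y with
  | zero => rfl
  | succ k ih =>
    rw [Function.iterate_succ_apply, Function.iterate_succ_apply, Function.iterate_succ_apply,
      map_mul, ih]

lemma it_inv (k : ℕ) (x : FreeGroup Bool) : (⇑θ)^[k] x⁻¹ = ((⇑θ)^[k] x)⁻¹ := by
  induction k generalizing x with
  | zero => rfl
  | succ k ih =>
    rw [Function.iterate_succ_apply, Function.iterate_succ_apply, map_inv, ih]

lemma it_pow (k N : ℕ) (x : FreeGroup Bool) : (⇑θ)^[k] (x ^ N) = ((⇑θ)^[k] x) ^ N := by
  induction k generalizing x with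
  | zero => rfl
  | succ k ih =>
    rw [Function.iterate_succ_apply, Function.iterate_succ_apply, map_pow, ih]

/-! ### more norm lemmas -/

lemma nn_pow {u : FreeGroup Bool} (hucc : CC u.toWord) (K : ℕ) :
    nn (u ^ K) = K * nn u := by
  simp [nn, toWord_pow hucc, length_repw]

lemma nn_conj_le (g x : FreeGroup Bool) : nn (g * x * g⁻¹) ≤ nn x + 2 * nn g := by
  have h1 := nn_mul_le (g * x) g⁻¹
  have h2 := nn_mul_le g x
  have h3 := nn_inv g
  omega

lemma nn_conj_ge (g x : FreeGroup Bool) : nn x ≤ nn (g * x * g⁻¹) + 2 * nn g := by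
  have h0 : x = g⁻¹ * (g * x * g⁻¹) * g := by group
  have h1 := nn_mul_le (g⁻¹ * (g * x * g⁻¹)) g
  have h2 := nn_mul_le g⁻¹ (g * x * g⁻¹)
  have h3 := nn_inv g
  calc nn x = nn (g⁻¹ * (g * x * g⁻¹) * g) := by rw [← h0]
    _ ≤ nn (g * x * g⁻¹) + 2 * nn g := by omega

end TMaux

theorem stmt_18 :
    ¬ ∃ (w : FreeGroup Bool) (i j : ℕ),
        w ≠ 1 ∧ 0 < i ∧ 0 < j ∧ IsConj ((⇑θ)^[i] w) (w ^ j) := by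
  rintro ⟨w, i, j, hw, hi, hj, hconj⟩
  obtain ⟨c, hc⟩ := isConj_iff.mp hconj
  obtain ⟨h, u, hu, hucc, hwdef⟩ := TMaux.cyc_decomp w hw
  have hθw : (⇑θ)^[i] w = (⇑θ)^[i] h * (⇑θ)^[i] u * ((⇑θ)^[i] h)⁻¹ := by
    rw [hwdef, TMaux.it_mul, TMaux.it_mul, TMaux.it_inv]
  have hwj : w ^ j = h * u ^ j * h⁻¹ := by rw [hwdef, conj_pow]
  set A0 := (⇑θ)^[i] h with hA0
  set g0 := A0⁻¹ * c⁻¹ * h with hg0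
  have key : (⇑θ)^[i] u = g0 * u ^ j * g0⁻¹ := by
    have h1 : A0 * (⇑θ)^[i] u * A0⁻¹ = c⁻¹ * (h * u ^ j * h⁻¹) * c := by
      rw [← hθw, ← hwj, ← hc]
      group
    calc (⇑θ)^[i] u = A0⁻¹ * (A0 * (⇑θ)^[i] u * A0⁻¹) * A0 := by group
      _ = A0⁻¹ * (c⁻¹ * (h * u ^ j * h⁻¹) * c) * A0 := by rw [h1]
      _ = g0 * u ^ j * g0⁻¹ := by rw [hg0]; group
  have hn : 1 ≤ TMaux.nn u := by
    have h1 : u.toWord ≠ [] := fun hh => hu (FreeGroup.toWord_eq_nil_iff.mp hh)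
    have h2 : u.toWord.length ≠ 0 := fun hh => h1 (List.length_eq_zero_iff.mp hh)
    unfold TMaux.nn
    omega
  have hj2 : j = 2 ^ i := by
    set G := TMaux.nn g0 with hG
    set n := TMaux.nn u with hndef
    set N0 := 2 * G + 1 with hN0
    have hEN : (⇑θ)^[i] (u ^ N0) = g0 * u ^ (j * N0) * g0⁻¹ := by
      rw [TMaux.it_pow, key, conj_pow, ← pow_mul]
    have hL : TMaux.nn ((⇑θ)^[i] (u ^ N0)) = 2 ^ i * (N0 * n) := by
      rw [TMaux.nn_theta_iter, TMaux.nn_pow hucc]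
    have hpown : TMaux.nn (u ^ (j * N0)) = j * N0 * n := TMaux.nn_pow hucc _
    have hub : 2 ^ i * (N0 * n) ≤ j * N0 * n + 2 * G := by
      rw [← hL, hEN, ← hpown]
      exact TMaux.nn_conj_le g0 _
    have hlb : j * N0 * n ≤ 2 ^ i * (N0 * n) + 2 * G := by
      rw [← hL, ← hpown]
      calc TMaux.nn (u ^ (j * N0))
          ≤ TMaux.nn (g0 * u ^ (j * N0) * g0⁻¹) + 2 * G := TMaux.nn_conj_ge g0 _
        _ = TMaux.nn ((⇑θ)^[i] (u ^ N0)) + 2 * G := by rw [hEN]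
    have hN0n : N0 ≤ N0 * n := Nat.le_mul_of_pos_right N0 (by omega)
    have hassoc : j * N0 * n = j * (N0 * n) := by ring
    rcases Nat.lt_trichotomy j (2 ^ i) with hlt | heq | hgt
    · exfalso
      have h1 : (j + 1) * (N0 * n) ≤ 2 ^ i * (N0 * n) :=
        Nat.mul_le_mul_right _ (by omega)
      have h2 : (j + 1) * (N0 * n) = j * (N0 * n) + N0 * n := by ring
      omega
    · exact heq
    · exfalso
      have h1 : (2 ^ i + 1) * (N0 * n) ≤ j * (N0 * n) :=
        Nat.mul_le_mul_right _ (by omega)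
      have h2 : (2 ^ i + 1) * (N0 * n) = 2 ^ i * (N0 * n) + N0 * n := by ring
      omega
  subst hj2
  have hnn_eq : TMaux.nn u = u.toWord.length := rfl
  set G := TMaux.nn g0 with hGdef
  set n := u.toWord.length with hndef
  have hn1 : 1 ≤ n := by omega
  set N := 2 * G + 2 * n + 8 with hNdef
  set m1 := n + 1 with hm1def
  -- step 5: iterate the conjugacy equation
  have step5 : ∀ m : ℕ, 1 ≤ m → ∃ gm : FreeGroup Bool,
      (⇑θ)^[m * i] (u ^ N) = gm * u ^ (N * 2 ^ (m * i)) * gm⁻¹ ∧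
      TMaux.nn gm ≤ 2 ^ (m * i) * G := by
    intro m hm
    induction m, hm using Nat.le_induction with
    | base =>
      refine ⟨g0, ?_, ?_⟩
      · rw [one_mul, TMaux.it_pow, key, conj_pow, ← pow_mul, Nat.mul_comm]
      · rw [one_mul]
        exact Nat.le_mul_of_pos_left G (by positivity)
    | succ m hm ihm =>
      obtain ⟨gm, hgm, hgmn⟩ := ihm
      have hexp : (m + 1) * i = m * i + i := by ring
      have hgeq : (⇑θ)^[i] (u ^ N) = g0 * u ^ (N * 2 ^ i) * g0⁻¹ := by
        rw [TMaux.it_pow, key, conj_pow, ← pow_mul, Nat.mul_comm]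
      refine ⟨(⇑θ)^[m * i] g0 * gm, ?_, ?_⟩
      · rw [hexp, Function.iterate_add_apply, hgeq, TMaux.it_mul, TMaux.it_mul, TMaux.it_inv]
        rw [show u ^ (N * 2 ^ i) = (u ^ N) ^ 2 ^ i by rw [← pow_mul], TMaux.it_pow, hgm,
          conj_pow, ← pow_mul]
        have hE : N * 2 ^ (m * i) * 2 ^ i = N * 2 ^ (m * i + i) := by rw [pow_add]; ring
        rw [hE]
        group
      · have h1 := TMaux.nn_mul_le ((⇑θ)^[m * i] g0) gm
        have h2 : TMaux.nn ((⇑θ)^[m * i] g0) = 2 ^ (m * i) * G := TMaux.nn_theta_iter _ _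
        have h3 : 2 ^ (m * i) * G + 2 ^ (m * i) * G ≤ 2 ^ ((m + 1) * i) * G := by
          have h4 : (2 : ℕ) ^ (m * i + i) = 2 ^ (m * i) * 2 ^ i := pow_add 2 _ _
          have h5 : (2 : ℕ) ≤ 2 ^ i := by
            calc (2 : ℕ) = 2 ^ 1 := (pow_one 2).symm
              _ ≤ 2 ^ i := Nat.pow_le_pow_right (by norm_num) hi
          have h6 : 2 ^ (m * i) * 2 ≤ 2 ^ (m * i) * 2 ^ i := Nat.mul_le_mul_left _ h5
          calc 2 ^ (m * i) * G + 2 ^ (m * i) * G = 2 ^ (m * i) * 2 * G := by ring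
            _ ≤ 2 ^ (m * i) * 2 ^ i * G := Nat.mul_le_mul_right _ h6
            _ = 2 ^ ((m + 1) * i) * G := by rw [hexp, h4]
        omega
  obtain ⟨gm, hgm, hgmn⟩ := step5 m1 (by omega)
  set k := m1 * i with hkdef
  have hKk : 2 * n ≤ 2 ^ k := by
    have h1 : n + 1 ≤ k := by
      have := Nat.le_mul_of_pos_right m1 hi
      omega
    have h2 : n < 2 ^ n := Nat.lt_two_pow_self
    have h3 : (2 : ℕ) ^ (n + 1) ≤ 2 ^ k := Nat.pow_le_pow_right (by norm_num) h1
    have h4 : (2 : ℕ) ^ (n + 1) = 2 * 2 ^ n := by rw [pow_succ]; ring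
    omega
  set P := 2 ^ k with hPdef
  have hP1 : 1 ≤ P := by rw [hPdef]; exact Nat.one_le_two_pow
  set K := N * P with hKdef2
  have hXw : (u ^ K).toWord = TMaux.repw K u.toWord := TMaux.toWord_pow hucc K
  have hXlen : (u ^ K).toWord.length = K * n := by
    rw [hXw, TMaux.length_repw]
  obtain ⟨d1, hd11, hd12, hA1⟩ := TMaux.lemA' (u ^ K) gm⁻¹
  obtain ⟨d2, hd21, hd22, hA2⟩ := TMaux.lemA' gm (u ^ K * gm⁻¹)
  have hnGlen : gm.toWord.length = TMaux.nn gm := rfl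
  have hd12' : d1 ≤ TMaux.nn gm := by
    have h1 : (gm⁻¹).toWord.length = TMaux.nn gm := by
      have := TMaux.nn_inv gm
      unfold TMaux.nn at this
      exact this
    omega
  -- size bounds
  have hb1 : 2 * G + 8 ≤ N := by omega
  have hb2 : 2 * (G * P) + 8 * P ≤ K := by
    calc 2 * (G * P) + 8 * P = (2 * G + 8) * P := by ring
      _ ≤ N * P := Nat.mul_le_mul_right P hb1
      _ = K := hKdef2.symm
  have hb3 : K ≤ K * n := Nat.le_mul_of_pos_right K (by omega)
  have hnG' : TMaux.nn gm ≤ G * P := by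
    have hcomm : P * G = G * P := Nat.mul_comm _ _
    omega
  have hbig : 2 * TMaux.nn gm + 8 * P ≤ (u ^ K).toWord.length := by omega
  have hd2s1 : d2 ≤ (u ^ K).toWord.length - d1 := by omega
  -- assemble the word of θ^[k] (u^N)
  have hWeq : (⇑θ)^[k] (u ^ N) = gm * (u ^ K * gm⁻¹) := by
    rw [hgm]
    group
  have htake_len : ((u ^ K).toWord.take ((u ^ K).toWord.length - d1)).length
      = (u ^ K).toWord.length - d1 := by
    rw [List.length_take]
    omega
  have hW : ((⇑θ)^[k] (u ^ N)).toWord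
      = gm.toWord.take (gm.toWord.length - d2)
        ++ (((u ^ K).toWord.take ((u ^ K).toWord.length - d1)).drop d2
            ++ (gm⁻¹).toWord.drop d1) := by
    rw [hWeq, hA2, hA1, List.drop_append, htake_len,
      show d2 - ((u ^ K).toWord.length - d1) = 0 by omega, List.drop_zero]
  have hotake : (gm.toWord.take (gm.toWord.length - d2)).length = gm.toWord.length - d2 := by
    rw [List.length_take]
    omega
  have hWL : TMaux.Sub^[k] ((u ^ N).toWord) = ((⇑θ)^[k] (u ^ N)).toWord :=
    (TMaux.toWord_theta_iter k (u ^ N)).symm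
  obtain ⟨o, ho⟩ : ∃ o, gm.toWord.length - d2 = o := ⟨_, rfl⟩
  obtain ⟨p, hp⟩ : ∃ p, (u ^ K).toWord.length - d1 - d2 = p := ⟨_, rfl⟩
  have hmid_len : (((u ^ K).toWord.take ((u ^ K).toWord.length - d1)).drop d2).length = p := by
    rw [List.length_drop, htake_len]
    omega
  have hWidx : ∀ r, r < p → TMaux.idx (((⇑θ)^[k] (u ^ N)).toWord) (o + r)
      = TMaux.idx ((u ^ K).toWord) (d2 + r) := by
    intro r hr
    rw [hW, show o + r = (gm.toWord.take (gm.toWord.length - d2)).length + r by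
      rw [hotake, ho], TMaux.idx_append_right,
      TMaux.idx_append_left _ _ r (by rw [hmid_len]; exact hr), TMaux.idx_drop]
    exact TMaux.idx_take _ _ (d2 + r) (by omega)
  have hperiod : ∀ t, t + n < p → TMaux.idx (TMaux.Sub^[k] ((u ^ N).toWord)) (o + t + n)
      = TMaux.idx (TMaux.Sub^[k] ((u ^ N).toWord)) (o + t) := by
    intro t ht
    rw [hWL, show o + t + n = o + (t + n) by omega, hWidx (t + n) (by omega),
      hWidx t (by omega), hXw]
    rw [TMaux.idx_repw K _ _ (by rw [TMaux.length_repw, ← hndef]; omega),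
      TMaux.idx_repw K _ _ (by rw [TMaux.length_repw, ← hndef]; omega)]
    congr 1
    rw [← hndef, show d2 + (t + n) = (d2 + t) + n by omega, Nat.add_mod_right]
  have hop : o + p ≤ (TMaux.Sub^[k] ((u ^ N).toWord)).length := by
    rw [hWL, hW]
    simp only [List.length_append, List.length_take, List.length_drop]
    omega
  exact TMaux.MCL k ((u ^ N).toWord) o p n hn1 hKk hop hperiod (by omega)
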